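/- The cartesian product of a 2-(v1,k1,λ) design with b1 blocks and a 2-(v2,k2,μ) design with b2 blocks — taking all b1*b2 blocks (S,T) where S is a block of the first and T a block of the second — is a 2-part 2-design with parameters λ11 = λ*b2, λ22 = μ*b1, and λ12 = r1*r2, where r1, r2 are the replication numbers of the two designs. -/

import Mathlib

open Finset

lemma prod_filter_card {α β : Type*} [Fintype α] [Fintype β]
    (P : α → Prop) (Q : β → Prop) [DecidablePred P] [DecidablePred Q] :
    (Finset.univ.filter (fun p : α × β => P p.1 ∧ Q p.2)).card
      = (Finset.univ.filter P).card * (Finset.univ.filter Q).card := by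
  rw [← Finset.univ_product_univ, Finset.filter_product, Finset.card_product]

/-- The cartesian product of a 2-(v1,k1,λ) design with b1 blocks and a
2-(v2,k2,μ) design with b2 blocks is a 2-part 2-design with parameters
λ11 = λ*b2, λ22 = μ*b1 and λ12 = r1*r2. -/
theorem cartesian_product_two_part
    (v1 v2 b1 b2 k1 k2 lam mu r1 r2 : ℕ)
    (A : Fin b1 → Finset (Fin v1)) (B : Fin b2 → Finset (Fin v2))
    (hA : ∀ i, (A i).card = k1) (hB : ∀ i, (B i).card = k2)
    (hk1 : 1 < k1) (hk1v : k1 < v1) (hk2 : 1 < k2) (hk2v : k2 < v2)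
    (hdes1 : ∀ x y : Fin v1, x ≠ y →
      (Finset.univ.filter (fun i => x ∈ A i ∧ y ∈ A i)).card = lam)
    (hdes2 : ∀ x y : Fin v2, x ≠ y →
      (Finset.univ.filter (fun i => x ∈ B i ∧ y ∈ B i)).card = mu)
    (hr1 : ∀ x : Fin v1, (Finset.univ.filter (fun i => x ∈ A i)).card = r1)
    (hr2 : ∀ y : Fin v2, (Finset.univ.filter (fun i => y ∈ B i)).card = r2) :
    (∀ x y : Fin v1, x ≠ y →
      (Finset.univ.filter (fun p : Fin b1 × Fin b2 => x ∈ A p.1 ∧ y ∈ A p.1)).card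
        = lam * b2) ∧
    (∀ x y : Fin v2, x ≠ y →
      (Finset.univ.filter (fun p : Fin b1 × Fin b2 => x ∈ B p.2 ∧ y ∈ B p.2)).card
        = mu * b1) ∧
    (∀ (x : Fin v1) (y : Fin v2),
      (Finset.univ.filter (fun p : Fin b1 × Fin b2 => x ∈ A p.1 ∧ y ∈ B p.2)).card
        = r1 * r2) := by
  refine ⟨fun x y hxy => ?_, fun x y hxy => ?_, fun x y => ?_⟩
  · have := prod_filter_card (α := Fin b1) (β := Fin b2)
      (fun i => x ∈ A i ∧ y ∈ A i) (fun _ => True)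
    simp only [and_true, filter_true, card_univ, Fintype.card_fin] at this
    rw [← hdes1 x y hxy]
    simpa using this
  · have := prod_filter_card (α := Fin b1) (β := Fin b2)
      (fun _ => True) (fun i => x ∈ B i ∧ y ∈ B i)
    simp only [true_and, filter_true, card_univ, Fintype.card_fin] at this
    rw [← hdes2 x y hxy]
    simpa [mul_comm] using this
  · have := prod_filter_card (α := Fin b1) (β := Fin b2)
      (fun i => x ∈ A i) (fun i => y ∈ B i)
    rw [← hr1 x, ← hr2 y]
    simpa using this
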